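/- The wire boundary gadget has exactly two gadget solutions: (i) the partition of all six cells into the 2×2 block formed by rows 0 and 1 together with the 1×2 block formed by row 2 (covering the optional area), and (ii) the single 2×2 block formed by rows 0 and 1 (covering only the mandatory area). In particular, no set of valid blocks tiles the mandatory area together with exactly one cell of the optional area. -/

import Mathlib

/-- A cell of the integer grid. -/
abbrev Cell : Type := ℤ × ℤ

/-- Two cells are edge-adjacent. -/
def CellAdj (a b : Cell) : Prop :=
  (a.1 - b.1).natAbs + (a.2 - b.2).natAbs = 1

/-- A set of cells is edge-connected (within itself). -/
def ConnectedIn (S : Set Cell) : Prop :=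
  ∀ a ∈ S, ∀ b ∈ S,
    Relation.ReflTransGen (fun x y : Cell => x ∈ S ∧ y ∈ S ∧ CellAdj x y) a b

/-- A map of the grid composed of translations, rotations and reflections
    (an integer isometry given by an orthogonal integer matrix plus a translation). -/
def IsGridIsometry (f : Cell → Cell) : Prop :=
  ∃ a b c d e g : ℤ,
    a * a + b * b = 1 ∧ c * c + d * d = 1 ∧ a * c + b * d = 0 ∧
    ∀ p : Cell, f p = (a * p.1 + b * p.2 + e, c * p.1 + d * p.2 + g)

/-- Two sets of cells are congruent: equal up to translation, rotation and reflection. -/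
def CongruentCells (A B : Set Cell) : Prop :=
  ∃ f : Cell → Cell, IsGridIsometry f ∧ f '' A = B

/-- A (coloring and clue assignment of a) Double Choco board:
    each cell is white (`true`) or gray (`false`), and may carry a clue. -/
structure Board where
  white : Cell → Bool
  clue : Cell → Option ℕ

/-- The white cells of a set. -/
def Board.whitePart (bd : Board) (B : Set Cell) : Set Cell := {p ∈ B | bd.white p = true}

/-- The gray cells of a set. -/
def Board.grayPart (bd : Board) (B : Set Cell) : Set Cell := {p ∈ B | bd.white p = false}

/-- A valid Double Choco block: a finite edge-connected set of cells whose white part and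
    gray part are nonempty, edge-connected, and congruent (hence of equal size), and such
    that any clue `n` carried by a cell of the block forces the white part and the gray
    part to have exactly `n` cells each. -/
def ValidBlock (bd : Board) (B : Set Cell) : Prop :=
  B.Finite ∧ ConnectedIn B ∧
  (bd.whitePart B).Nonempty ∧ (bd.grayPart B).Nonempty ∧
  ConnectedIn (bd.whitePart B) ∧ ConnectedIn (bd.grayPart B) ∧
  CongruentCells (bd.whitePart B) (bd.grayPart B) ∧
  ∀ p ∈ B, ∀ n : ℕ, bd.clue p = some n →
    (bd.whitePart B).ncard = n ∧ (bd.grayPart B).ncard = n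

/-- A partition of `area` into pairwise disjoint valid blocks. -/
def IsBlockPartition (bd : Board) (blocks : Set (Set Cell)) (area : Set Cell) : Prop :=
  (∀ B ∈ blocks, ValidBlock bd B) ∧
  blocks.PairwiseDisjoint id ∧
  ⋃₀ blocks = area

/-- A gadget: a board together with a mandatory area and a collection of optional areas. -/
structure Gadget where
  board : Board
  mandatory : Set Cell
  optionals : Set (Set Cell)

/-- The entire area of a gadget. -/
def Gadget.area (G : Gadget) : Set Cell := G.mandatory ∪ ⋃₀ G.optionals

/-- A gadget solution: a partition into valid blocks of an assigned area containing the
    mandatory area, contained in the gadget, that fully covers or fully avoids each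
    optional area. -/
def IsGadgetSolution (G : Gadget) (area : Set Cell) (blocks : Set (Set Cell)) : Prop :=
  G.mandatory ⊆ area ∧ area ⊆ G.area ∧
  (∀ O ∈ G.optionals, O ⊆ area ∨ Disjoint O area) ∧
  IsBlockPartition G.board blocks area

/-- Row `j` of the (two cells wide) wire boundary gadget: cells `(0, j)` and `(1, j)`. -/
def wireRow (j : ℤ) : Set Cell := {((0 : ℤ), j), ((1 : ℤ), j)}

/-- The board of the wire boundary gadget: column 0 is white, column 1 is gray,
    the cells of rows 0 and 1 carry the clue 2 while the cells of row 2 carry no clue. -/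
def wbBoard : Board where
  white := fun p => decide (p.1 = 0)
  clue := fun p => if p.2 = 2 then none else some 2

/-- The wire boundary gadget: cells `{0,1} × {0,1,2}`; rows 0 and 1 form the mandatory
    area and row 2 is the single optional area. -/
def wbGadget : Gadget where
  board := wbBoard
  mandatory := wireRow 0 ∪ wireRow 1
  optionals := {wireRow 2}

open Set

lemma cellAdj_iff (a b : Cell) :
    CellAdj a b ↔ (a.1 - b.1).natAbs + (a.2 - b.2).natAbs = 1 := Iff.rfl

lemma cellAdj_symm {a b : Cell} (h : CellAdj a b) : CellAdj b a := by
  rw [cellAdj_iff] at h ⊢; omega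

/-- explicit 2×2 block of rows 0 and 1 -/
def wbR01 : Set Cell := {((0:ℤ),(0:ℤ)), ((0:ℤ),(1:ℤ)), ((1:ℤ),(0:ℤ)), ((1:ℤ),(1:ℤ))}

/-- explicit row 2 -/
def wbRow2 : Set Cell := {((0:ℤ),(2:ℤ)), ((1:ℤ),(2:ℤ))}

/-- all six cells -/
def wbSix : Set Cell :=
  {((0:ℤ),(0:ℤ)), ((0:ℤ),(1:ℤ)), ((0:ℤ),(2:ℤ)),
   ((1:ℤ),(0:ℤ)), ((1:ℤ),(1:ℤ)), ((1:ℤ),(2:ℤ))}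

lemma R01_eq : wireRow 0 ∪ wireRow 1 = wbR01 := by
  ext ⟨x, y⟩; simp [wireRow, wbR01, Prod.ext_iff]; omega

lemma row2_eq : wireRow 2 = wbRow2 := rfl

lemma six_eq : wireRow 0 ∪ wireRow 1 ∪ wireRow 2 = wbSix := by
  ext ⟨x, y⟩; simp [wireRow, wbSix, Prod.ext_iff]; omega

lemma wb_white_iff (p : Cell) : wbBoard.white p = true ↔ p.1 = 0 := by
  simp [wbBoard]

lemma wb_gray_iff (p : Cell) : wbBoard.white p = false ↔ ¬ p.1 = 0 := by
  simp [wbBoard]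

lemma wb_clue_eq (p : Cell) (h : p.2 ≠ 2) : wbBoard.clue p = some 2 := by
  simp [wbBoard, h]

lemma wb_eq_of_no_adj {S : Set Cell}
    (h : ∀ x ∈ S, ∀ y ∈ S, ¬ CellAdj x y) (hc : ConnectedIn S)
    {a b : Cell} (ha : a ∈ S) (hb : b ∈ S) : a = b := by
  induction hc a ha b hb with
  | refl => rfl
  | tail _ h' ih => exact absurd h'.2.2 (h _ h'.1 _ h'.2.1)

lemma wb_col2 (x : ℤ) (S : Set Cell)
    (hS : S ⊆ {(x,0),(x,1),(x,2)}) (hc : ConnectedIn S) (h2 : S.ncard = 2) :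
    S = {(x,0),(x,1)} ∨ S = {(x,1),(x,2)} := by
  by_cases h0 : (x,(0:ℤ)) ∈ S <;> by_cases h1 : (x,(1:ℤ)) ∈ S <;>
    by_cases hh : (x,(2:ℤ)) ∈ S
  · -- all three
    exfalso
    have hSeq : S = {(x,0),(x,1),(x,2)} := by
      apply subset_antisymm hS
      intro p hp
      simp only [mem_insert_iff, mem_singleton_iff] at hp
      rcases hp with rfl | rfl | rfl <;> assumption
    rw [hSeq] at h2
    rw [Set.ncard_insert_of_notMem (by simp), Set.ncard_insert_of_notMem (by simp),
      Set.ncard_singleton] at h2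
    omega
  · left
    apply subset_antisymm
    · intro p hp
      have := hS hp
      simp only [mem_insert_iff, mem_singleton_iff] at this ⊢
      rcases this with rfl | rfl | rfl
      · exact Or.inl rfl
      · exact Or.inr rfl
      · exact absurd hp hh
    · intro p hp
      simp only [mem_insert_iff, mem_singleton_iff] at hp
      rcases hp with rfl | rfl <;> assumption
  · exfalso
    have hSeq : S = {(x,0),(x,2)} := by
      apply subset_antisymm
      · intro p hp
        have := hS hp
        simp only [mem_insert_iff, mem_singleton_iff] at this ⊢
        rcases this with rfl | rfl | rfl
        · exact Or.inl rfl
        · exact absurd hp h1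
        · exact Or.inr rfl
      · intro p hp
        simp only [mem_insert_iff, mem_singleton_iff] at hp
        rcases hp with rfl | rfl <;> assumption
    have hno : ∀ p ∈ S, ∀ q ∈ S, ¬ CellAdj p q := by
      intro p hp q hq hadj
      rw [hSeq] at hp hq
      simp only [mem_insert_iff, mem_singleton_iff] at hp hq
      rw [cellAdj_iff] at hadj
      rcases hp with rfl | rfl <;> rcases hq with rfl | rfl <;> simp at hadj
    have := wb_eq_of_no_adj hno hc (hSeq ▸ (by simp : (x,(0:ℤ)) ∈ ({(x,0),(x,2)} : Set Cell)))
      (hSeq ▸ (by simp : (x,(2:ℤ)) ∈ ({(x,0),(x,2)} : Set Cell)))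
    simp [Prod.ext_iff] at this
  · exfalso
    have hSeq : S = {(x,0)} := by
      apply subset_antisymm
      · intro p hp
        have := hS hp
        simp only [mem_insert_iff, mem_singleton_iff] at this ⊢
        rcases this with rfl | rfl | rfl
        · rfl
        · exact absurd hp h1
        · exact absurd hp hh
      · intro p hp
        simp only [mem_singleton_iff] at hp
        subst hp; assumption
    rw [hSeq, Set.ncard_singleton] at h2; omega
  · right
    apply subset_antisymm
    · intro p hp
      have := hS hp
      simp only [mem_insert_iff, mem_singleton_iff] at this ⊢
      rcases this with rfl | rfl | rfl
      · exact absurd hp h0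
      · exact Or.inl rfl
      · exact Or.inr rfl
    · intro p hp
      simp only [mem_insert_iff, mem_singleton_iff] at hp
      rcases hp with rfl | rfl <;> assumption
  · exfalso
    have hSeq : S = {(x,1)} := by
      apply subset_antisymm
      · intro p hp
        have := hS hp
        simp only [mem_insert_iff, mem_singleton_iff] at this ⊢
        rcases this with rfl | rfl | rfl
        · exact absurd hp h0
        · rfl
        · exact absurd hp hh
      · intro p hp
        simp only [mem_singleton_iff] at hp
        subst hp; assumption
    rw [hSeq, Set.ncard_singleton] at h2; omega
  · exfalso
    have hSeq : S = {(x,2)} := by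
      apply subset_antisymm
      · intro p hp
        have := hS hp
        simp only [mem_insert_iff, mem_singleton_iff] at this ⊢
        rcases this with rfl | rfl | rfl
        · exact absurd hp h0
        · exact absurd hp h1
        · rfl
      · intro p hp
        simp only [mem_singleton_iff] at hp
        subst hp; assumption
    rw [hSeq, Set.ncard_singleton] at h2; omega
  · exfalso
    have hSeq : S = ∅ := by
      apply subset_antisymm _ (empty_subset _)
      intro p hp
      have := hS hp
      simp only [mem_insert_iff, mem_singleton_iff] at this
      rcases this with rfl | rfl | rfl
      · exact absurd hp h0
      · exact absurd hp h1
      · exact absurd hp hh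
    rw [hSeq, Set.ncard_empty] at h2; omega

lemma wb_step_symm (S : Set Cell) :
    Symmetric (fun x y : Cell => x ∈ S ∧ y ∈ S ∧ CellAdj x y) := by
  rintro x y ⟨hx, hy, h⟩
  exact ⟨hy, hx, cellAdj_symm h⟩

lemma conn_pair {a b : Cell} (h : CellAdj a b) : ConnectedIn {a, b} := by
  intro x hx y hy
  simp only [mem_insert_iff, mem_singleton_iff] at hx hy
  rcases hx with rfl | rfl <;> rcases hy with rfl | rfl
  · exact .refl
  · exact .single ⟨by simp, by simp, h⟩
  · exact .single ⟨by simp, by simp, cellAdj_symm h⟩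
  · exact .refl

lemma conn_singleton (a : Cell) : ConnectedIn {a} := by
  intro x hx y hy
  simp only [mem_singleton_iff] at hx hy
  subst hx; subst hy; exact .refl

lemma connR01 : ConnectedIn wbR01 := by
  have key : ∀ a ∈ wbR01,
      Relation.ReflTransGen (fun x y : Cell => x ∈ wbR01 ∧ y ∈ wbR01 ∧ CellAdj x y)
        ((0:ℤ),(0:ℤ)) a := by
    intro a ha
    simp only [wbR01, mem_insert_iff, mem_singleton_iff] at ha
    rcases ha with rfl | rfl | rfl | rfl
    · exact .refl
    · exact .single ⟨by simp [wbR01], by simp [wbR01], by rw [cellAdj_iff]; decide⟩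
    · exact .single ⟨by simp [wbR01], by simp [wbR01], by rw [cellAdj_iff]; decide⟩
    · have h1 : Relation.ReflTransGen
          (fun x y : Cell => x ∈ wbR01 ∧ y ∈ wbR01 ∧ CellAdj x y)
          ((0:ℤ),(0:ℤ)) ((0:ℤ),(1:ℤ)) :=
        .single ⟨by simp [wbR01], by simp [wbR01], by rw [cellAdj_iff]; decide⟩
      exact h1.tail ⟨by simp [wbR01], by simp [wbR01], by rw [cellAdj_iff]; decide⟩
  intro a ha b hb
  exact Relation.ReflTransGen.trans
    ((@Relation.ReflTransGen.stdSymm _ _ ⟨fun _ _ h => wb_step_symm wbR01 h⟩).symm _ _ (key a ha)) (key b hb)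

lemma congr_shift_pair (y₁ y₂ : ℤ) :
    CongruentCells {((0:ℤ), y₁), ((0:ℤ), y₂)} {((1:ℤ), y₁), ((1:ℤ), y₂)} := by
  refine ⟨fun p => (p.1 + 1, p.2), ⟨1, 0, 0, 1, 1, 0, by ring, by ring, by ring,
    fun p => by simp [Prod.ext_iff]⟩, ?_⟩
  rw [Set.image_pair]; norm_num

lemma congr_shift_singleton (y : ℤ) :
    CongruentCells {((0:ℤ), y)} {((1:ℤ), y)} := by
  refine ⟨fun p => (p.1 + 1, p.2), ⟨1, 0, 0, 1, 1, 0, by ring, by ring, by ring,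
    fun p => by simp [Prod.ext_iff]⟩, ?_⟩
  rw [Set.image_singleton]; norm_num

lemma wpR01 : wbBoard.whitePart wbR01 = {((0:ℤ),(0:ℤ)), ((0:ℤ),(1:ℤ))} := by
  ext ⟨x, y⟩
  simp [Board.whitePart, wbBoard, wbR01, Prod.ext_iff]
  omega

lemma gpR01 : wbBoard.grayPart wbR01 = {((1:ℤ),(0:ℤ)), ((1:ℤ),(1:ℤ))} := by
  ext ⟨x, y⟩
  simp [Board.grayPart, wbBoard, wbR01, Prod.ext_iff]
  omega

lemma wpRow2 : wbBoard.whitePart wbRow2 = {((0:ℤ),(2:ℤ))} := by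
  ext ⟨x, y⟩
  simp [Board.whitePart, wbBoard, wbRow2, Prod.ext_iff]
  omega

lemma gpRow2 : wbBoard.grayPart wbRow2 = {((1:ℤ),(2:ℤ))} := by
  ext ⟨x, y⟩
  simp [Board.grayPart, wbBoard, wbRow2, Prod.ext_iff]
  omega

lemma VB1 : ValidBlock wbBoard wbR01 := by
  refine ⟨by unfold wbR01; exact Set.toFinite _, connR01, ?_, ?_, ?_, ?_, ?_, ?_⟩
  · rw [wpR01]; exact ⟨((0:ℤ),(0:ℤ)), by simp⟩
  · rw [gpR01]; exact ⟨((1:ℤ),(0:ℤ)), by simp⟩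
  · rw [wpR01]; exact conn_pair (by rw [cellAdj_iff]; decide)
  · rw [gpR01]; exact conn_pair (by rw [cellAdj_iff]; decide)
  · rw [wpR01, gpR01]; exact congr_shift_pair 0 1
  · intro p hp n hn
    have h2 : p.2 ≠ 2 := by
      simp only [wbR01, mem_insert_iff, mem_singleton_iff] at hp
      rcases hp with rfl | rfl | rfl | rfl <;> simp
    rw [wb_clue_eq p h2] at hn
    have hn2 : n = 2 := by injection hn; omega
    subst hn2
    rw [wpR01, gpR01]
    constructor <;> exact Set.ncard_pair (by decide)

lemma VB2 : ValidBlock wbBoard wbRow2 := by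
  refine ⟨by unfold wbRow2; exact Set.toFinite _,
    by unfold wbRow2; exact conn_pair (by rw [cellAdj_iff]; decide), ?_, ?_, ?_, ?_, ?_, ?_⟩
  · rw [wpRow2]; exact ⟨((0:ℤ),(2:ℤ)), by simp⟩
  · rw [gpRow2]; exact ⟨((1:ℤ),(2:ℤ)), by simp⟩
  · rw [wpRow2]; exact conn_singleton _
  · rw [gpRow2]; exact conn_singleton _
  · rw [wpRow2, gpRow2]; exact congr_shift_singleton 2
  · intro p hp n hn
    exfalso
    have h2 : p.2 = 2 := by
      simp only [wbRow2, mem_insert_iff, mem_singleton_iff] at hp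
      rcases hp with rfl | rfl <;> simp
    simp [wbBoard, h2] at hn

lemma wb_whitePart_mem {B : Set Cell} {p : Cell} (hp : p ∈ wbBoard.whitePart B) :
    p ∈ B ∧ p.1 = 0 := by
  obtain ⟨h1, h2⟩ := hp
  exact ⟨h1, (wb_white_iff p).mp h2⟩

lemma wb_grayPart_mem {B : Set Cell} {p : Cell} (hp : p ∈ wbBoard.grayPart B) :
    p ∈ B ∧ ¬ p.1 = 0 := by
  obtain ⟨h1, h2⟩ := hp
  exact ⟨h1, (wb_gray_iff p).mp h2⟩

lemma wb_parts_cover (B : Set Cell) : B = wbBoard.whitePart B ∪ wbBoard.grayPart B := by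
  ext p
  simp only [Board.whitePart, Board.grayPart, mem_union, mem_setOf_eq, mem_sep_iff]
  cases hw : wbBoard.white p <;> tauto

/-- the block of a partition containing (0,0) must be the 2×2 block of rows 0 and 1 -/
lemma block_p00 {blocks : Set (Set Cell)} {A : Set Cell}
    (hA : A ⊆ wbSix) (hman : wbR01 ⊆ A)
    (hpart : IsBlockPartition wbBoard blocks A) : wbR01 ∈ blocks := by
  obtain ⟨hvalid, hdisj, hcover⟩ := hpart
  have hp00A : ((0:ℤ),(0:ℤ)) ∈ ⋃₀ blocks := by
    rw [hcover]; exact hman (by simp [wbR01])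
  obtain ⟨B, hB, hp00B⟩ := hp00A
  have hVB := hvalid B hB
  have hBsub : B ⊆ A := by rw [← hcover]; exact subset_sUnion_of_mem hB
  have hWsub : wbBoard.whitePart B ⊆ {((0:ℤ),(0:ℤ)), ((0:ℤ),(1:ℤ)), ((0:ℤ),(2:ℤ))} := by
    intro p hp
    obtain ⟨hpB, hpw⟩ := wb_whitePart_mem hp
    have hsix := hA (hBsub hpB)
    obtain ⟨x, y⟩ := p
    simp only [wbSix, mem_insert_iff, mem_singleton_iff, Prod.ext_iff] at hsix ⊢
    simp only at hpw
    omega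
  have hGsub : wbBoard.grayPart B ⊆ {((1:ℤ),(0:ℤ)), ((1:ℤ),(1:ℤ)), ((1:ℤ),(2:ℤ))} := by
    intro p hp
    obtain ⟨hpB, hpw⟩ := wb_grayPart_mem hp
    have hsix := hA (hBsub hpB)
    obtain ⟨x, y⟩ := p
    simp only [wbSix, mem_insert_iff, mem_singleton_iff, Prod.ext_iff] at hsix ⊢
    simp only at hpw
    omega
  have hclue := hVB.2.2.2.2.2.2.2 ((0:ℤ),(0:ℤ)) hp00B 2 (wb_clue_eq _ (by decide))
  have hW := wb_col2 0 _ hWsub hVB.2.2.2.2.1 hclue.1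
  have hG := wb_col2 1 _ hGsub hVB.2.2.2.2.2.1 hclue.2
  have hp00W : ((0:ℤ),(0:ℤ)) ∈ wbBoard.whitePart B := ⟨hp00B, by rw [wb_white_iff]⟩
  rcases hW with hW | hW
  swap
  · exfalso
    rw [hW] at hp00W
    simp [Prod.ext_iff] at hp00W
  rcases hG with hG | hG
  · have hBeq : B = wbR01 := by
      rw [wb_parts_cover B, hW, hG]
      ext p
      simp only [wbR01, mem_union, mem_insert_iff, mem_singleton_iff]
      tauto
    rwa [hBeq] at hB
  · exfalso
    have hBeq : B = {((0:ℤ),(0:ℤ)), ((0:ℤ),(1:ℤ)), ((1:ℤ),(1:ℤ)), ((1:ℤ),(2:ℤ))} := by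
      rw [wb_parts_cover B, hW, hG]
      ext p
      simp only [mem_union, mem_insert_iff, mem_singleton_iff]
      tauto
    have hp10A : ((1:ℤ),(0:ℤ)) ∈ ⋃₀ blocks := by
      rw [hcover]; exact hman (by simp [wbR01])
    obtain ⟨B', hB', hp10B'⟩ := hp10A
    have hp10B : ((1:ℤ),(0:ℤ)) ∉ B := by
      rw [hBeq]
      simp [Prod.ext_iff]
    have hne : B' ≠ B := fun h => hp10B (h ▸ hp10B')
    have hdis : Disjoint B' B := hdisj hB' hB hne
    have hB'sub : B' ⊆ A := by rw [← hcover]; exact subset_sUnion_of_mem hB'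
    have hclue' := (hvalid B' hB').2.2.2.2.2.2.2 ((1:ℤ),(0:ℤ)) hp10B' 2
      (wb_clue_eq _ (by decide))
    have hsub' : wbBoard.whitePart B' ⊆ {((0:ℤ),(2:ℤ))} := by
      intro p hp
      obtain ⟨hpB', hpw⟩ := wb_whitePart_mem hp
      have hsix := hA (hB'sub hpB')
      have hpnotB : p ∉ B := fun h => Set.disjoint_left.mp hdis hpB' h
      rw [hBeq] at hpnotB
      obtain ⟨x, y⟩ := p
      simp only [wbSix, mem_insert_iff, mem_singleton_iff, Prod.ext_iff] at hsix hpnotB ⊢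
      simp only at hpw
      omega
    have hle : (wbBoard.whitePart B').ncard ≤ 1 :=
      le_trans (Set.ncard_le_ncard hsub' (Set.finite_singleton _)) (by simp)
    rw [hclue'.1] at hle
    omega

lemma other_block {blocks : Set (Set Cell)} {A : Set Cell}
    (hpart : IsBlockPartition wbBoard blocks A) (hR : wbR01 ∈ blocks)
    {B : Set Cell} (hB : B ∈ blocks) (hne : B ≠ wbR01) : B ⊆ A \ wbR01 := by
  intro p hp
  refine ⟨?_, fun h => Set.disjoint_left.mp (hpart.2.1 hB hR hne) hp h⟩
  rw [← hpart.2.2]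
  exact subset_sUnion_of_mem hB hp

lemma partition4 {blocks : Set (Set Cell)}
    (hpart : IsBlockPartition wbBoard blocks wbR01) : blocks = {wbR01} := by
  have hR := block_p00 (by intro p hp; simp only [wbR01, wbSix,
    mem_insert_iff, mem_singleton_iff] at hp ⊢; tauto) subset_rfl hpart
  ext B
  simp only [mem_singleton_iff]
  constructor
  · intro hB
    by_contra hne
    have hsub := other_block hpart hR hB hne
    obtain ⟨p, hp⟩ := (hpart.1 B hB).2.2.1
    exact (hsub hp.1).2 (hsub hp.1).1
  · rintro rfl; exact hR

lemma partition6 {blocks : Set (Set Cell)}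
    (hpart : IsBlockPartition wbBoard blocks wbSix) : blocks = {wbR01, wbRow2} := by
  have hsubsix : wbR01 ⊆ wbSix := by
    intro p hp
    simp only [wbR01, wbSix, mem_insert_iff, mem_singleton_iff] at hp ⊢
    tauto
  have hR := block_p00 subset_rfl hsubsix hpart
  have key : ∀ B ∈ blocks, B ≠ wbR01 → B = wbRow2 := by
    intro B hB hne
    have hsub := other_block hpart hR hB hne
    have hsub2 : B ⊆ wbRow2 := by
      intro p hp
      have h1 := hsub hp
      obtain ⟨x, y⟩ := p
      simp only [wbSix, wbR01, wbRow2, mem_diff, mem_insert_iff,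
        mem_singleton_iff, Prod.ext_iff] at h1 ⊢
      tauto
    apply subset_antisymm hsub2
    obtain ⟨pw, hpw⟩ := (hpart.1 B hB).2.2.1
    obtain ⟨pg, hpg⟩ := (hpart.1 B hB).2.2.2.1
    have hw := wb_whitePart_mem hpw
    have hg := wb_grayPart_mem hpg
    have hwm := hsub2 hw.1
    have hgm := hsub2 hg.1
    have hpweq : pw = ((0:ℤ),(2:ℤ)) := by
      obtain ⟨x, y⟩ := pw
      simp only [wbRow2, mem_insert_iff, mem_singleton_iff, Prod.ext_iff] at hwm ⊢
      simp only at hw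
      omega
    have hpgeq : pg = ((1:ℤ),(2:ℤ)) := by
      obtain ⟨x, y⟩ := pg
      simp only [wbRow2, mem_insert_iff, mem_singleton_iff, Prod.ext_iff] at hgm ⊢
      simp only at hg
      omega
    intro p hp
    simp only [wbRow2, mem_insert_iff, mem_singleton_iff] at hp
    rcases hp with rfl | rfl
    · exact hpweq ▸ hw.1
    · exact hpgeq ▸ hg.1
  have hrow2 : wbRow2 ∈ blocks := by
    have hp02 : ((0:ℤ),(2:ℤ)) ∈ ⋃₀ blocks := by
      rw [hpart.2.2]; simp [wbSix]
    obtain ⟨B, hB, hpB⟩ := hp02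
    have hne : B ≠ wbR01 := by
      rintro rfl
      simp [wbR01, Prod.ext_iff] at hpB
    rw [← key B hB hne]; exact hB
  ext B
  simp only [mem_insert_iff, mem_singleton_iff]
  constructor
  · intro hB
    by_cases hne : B = wbR01
    · exact Or.inl hne
    · exact Or.inr (key B hB hne)
  · rintro (rfl | rfl)
    · exact hR
    · exact hrow2

lemma partition5 (c : Cell) (hc : c ∈ wireRow 2) {blocks : Set (Set Cell)}
    (hpart : IsBlockPartition wbBoard blocks (wbR01 ∪ {c})) : False := by
  have hcmem : c = ((0:ℤ),(2:ℤ)) ∨ c = ((1:ℤ),(2:ℤ)) := by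
    simpa [wireRow] using hc
  have hA : wbR01 ∪ {c} ⊆ wbSix := by
    intro p hp
    simp only [mem_union, mem_singleton_iff] at hp
    rcases hp with hp | rfl
    · simp only [wbR01, mem_insert_iff, mem_singleton_iff] at hp
      simp only [wbSix, mem_insert_iff, mem_singleton_iff]; tauto
    · rcases hcmem with rfl | rfl <;> simp [wbSix]
  have hR := block_p00 hA subset_union_left hpart
  have hcA : c ∈ ⋃₀ blocks := by
    rw [hpart.2.2]; exact Or.inr rfl
  obtain ⟨B, hB, hcB⟩ := hcA
  have hcnotR : c ∉ wbR01 := by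
    rcases hcmem with rfl | rfl <;> simp [wbR01, Prod.ext_iff]
  have hne : B ≠ wbR01 := fun h => hcnotR (h ▸ hcB)
  have hsub : B ⊆ {c} := by
    intro p hp
    have h1 := other_block hpart hR hB hne hp
    rcases h1.1 with h | h
    · exact absurd h h1.2
    · exact h
  obtain ⟨pw, hpw⟩ := (hpart.1 B hB).2.2.1
  obtain ⟨pg, hpg⟩ := (hpart.1 B hB).2.2.2.1
  have hw := wb_whitePart_mem hpw
  have hg := wb_grayPart_mem hpg
  have h1 : pw = c := hsub hw.1
  have h2 : pg = c := hsub hg.1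
  rw [h1] at hw
  rw [h2] at hg
  exact hg.2 (hw.2 ▸ hw.2)

lemma R01_sub_six : wbR01 ⊆ wbSix := by
  intro p hp
  simp only [wbR01, wbSix, mem_insert_iff, mem_singleton_iff] at hp ⊢
  tauto

lemma area_eq : wbGadget.area = wbSix := by
  rw [← six_eq]
  simp [Gadget.area, wbGadget, Set.sUnion_singleton, Set.union_assoc]

lemma disjR01row2 : Disjoint (wireRow 0 ∪ wireRow 1) (wireRow 2) := by
  rw [R01_eq, row2_eq, Set.disjoint_left]
  intro p hp hq
  obtain ⟨x, y⟩ := p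
  simp only [wbR01, wbRow2, mem_insert_iff, mem_singleton_iff, Prod.ext_iff] at hp hq
  omega


/-- The wire boundary gadget has exactly two gadget solutions: (i) all six cells,
    partitioned into the 2×2 block of rows 0 and 1 plus the 1×2 block of row 2 (covering
    the optional area), and (ii) the single 2×2 block of rows 0 and 1 (covering only the
    mandatory area).  In particular, no set of valid blocks tiles the mandatory area
    together with exactly one cell of the optional area. -/
theorem wire_boundary_profile_table_complete :
    (∀ (area : Set Cell) (blocks : Set (Set Cell)),
      IsGadgetSolution wbGadget area blocks ↔
        (area = wireRow 0 ∪ wireRow 1 ∪ wireRow 2 ∧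
          blocks = {wireRow 0 ∪ wireRow 1, wireRow 2}) ∨
        (area = wireRow 0 ∪ wireRow 1 ∧ blocks = {wireRow 0 ∪ wireRow 1})) ∧
    (∀ c ∈ wireRow 2,
      ¬ ∃ blocks : Set (Set Cell),
          IsBlockPartition wbBoard blocks (wireRow 0 ∪ wireRow 1 ∪ {c})) := by
  constructor
  · intro area blocks
    constructor
    · rintro ⟨hman, harea, hopt, hpart⟩
      have hman' : wbR01 ⊆ area := by rw [← R01_eq]; exact hman
      have harea' : area ⊆ wbSix := area_eq ▸ harea
      have hpart' : IsBlockPartition wbBoard blocks area := hpart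
      rcases hopt (wireRow 2) (by simp [wbGadget]) with hcov | hdisj
      · left
        have hAeq : area = wbSix := by
          apply subset_antisymm harea'
          rw [← six_eq]
          exact Set.union_subset hman hcov
        rw [hAeq] at hpart'
        have hbl := partition6 hpart'
        refine ⟨by rw [hAeq, six_eq], ?_⟩
        rw [R01_eq, row2_eq]
        exact hbl
      · right
        have hAeq : area = wbR01 := by
          apply subset_antisymm
          · intro p hp
            have h6 := harea' hp
            have hnr : p ∉ wireRow 2 := fun hr => Set.disjoint_left.mp hdisj hr hp
            obtain ⟨x, y⟩ := p
            simp only [wbSix, wbR01, wireRow, mem_insert_iff, mem_singleton_iff,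
              Prod.ext_iff] at h6 hnr ⊢
            omega
          · exact hman'
        rw [hAeq] at hpart'
        have hbl := partition4 hpart'
        refine ⟨by rw [hAeq, R01_eq], ?_⟩
        rw [R01_eq]
        exact hbl
    · rintro (⟨rfl, rfl⟩ | ⟨rfl, rfl⟩)
      · refine ⟨subset_union_left, by rw [area_eq, six_eq], ?_, ?_, ?_, ?_⟩
        · intro O hO
          simp only [wbGadget, mem_singleton_iff] at hO
          subst hO
          exact Or.inl subset_union_right
        · intro B hB
          simp only [mem_insert_iff, mem_singleton_iff] at hB
          rcases hB with rfl | rfl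
          · show ValidBlock wbBoard _
            rw [R01_eq]; exact VB1
          · show ValidBlock wbBoard _
            rw [row2_eq]; exact VB2
        · intro x hx y hy hne
          simp only [mem_insert_iff, mem_singleton_iff] at hx hy
          rcases hx with rfl | rfl <;> rcases hy with rfl | rfl
          · exact absurd rfl hne
          · exact disjR01row2
          · exact disjR01row2.symm
          · exact absurd rfl hne
        · rw [Set.sUnion_pair]
      · refine ⟨subset_rfl, by rw [area_eq, R01_eq]; exact R01_sub_six, ?_, ?_, ?_, ?_⟩
        · intro O hO
          simp only [wbGadget, mem_singleton_iff] at hO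
          subst hO
          exact Or.inr disjR01row2.symm
        · intro B hB
          simp only [mem_singleton_iff] at hB
          subst hB
          show ValidBlock wbBoard _
          rw [R01_eq]; exact VB1
        · exact Set.pairwiseDisjoint_singleton _ _
        · rw [Set.sUnion_singleton]
  · rintro c hc ⟨blocks, hpart⟩
    exact partition5 c hc (by rwa [R01_eq] at hpart)
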